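/- Let V be a maximal isotropic subspace with respect to ω, let ψ₀ be a stabilizer state for V, let K : ℕ with 0 < K ≤ 2^p, and let (c_j, d_j), j : Fin K, be labels lying in pairwise distinct cosets of V (i.e. (c_j + c_k, d_j + d_k) ∉ V for j ≠ k). Then the basis codewords ψ_j = σ(c_j,d_j).mulVec ψ₀ are pairwise orthogonal and each nonzero; consequently they are linearly independent over ℂ and span a K-dimensional code subspace [[p,K]] of ℂ^(2^p). (Paper's Theorem 2: every Cartan subalgebra of su(2^p) decides quantum codes [[p,K]] for every 0 < K ≤ 2^p.) -/
import Mathlib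


open Matrix BigOperators

/-- The mod-2 dot product of two bitstrings. -/
def dotp {p : ℕ} (a b : Fin p → ZMod 2) : ZMod 2 := ∑ i, a i * b i

/-- The sign `(-1)^t` for `t : ZMod 2`. -/
noncomputable def sgn (t : ZMod 2) : ℂ := (-1 : ℂ) ^ t.val

/-- The Pauli spinor matrix `σ(a,b)`, representing `⊗ᵢ X^(a i) Z^(b i)`:
`σ(a,b) x y = (-1)^(b⬝x)` if `y = x + a` and `0` otherwise. -/
noncomputable def pauli {p : ℕ} (a b : Fin p → ZMod 2) :
    Matrix (Fin p → ZMod 2) (Fin p → ZMod 2) ℂ :=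
  fun x y => if y = x + a then sgn (dotp b x) else 0

/-- The symplectic form `ω((a,b),(c,d)) = a⬝d + b⬝c` on pairs of bitstrings. -/
def omegaF {p : ℕ} (u v : (Fin p → ZMod 2) × (Fin p → ZMod 2)) : ZMod 2 :=
  dotp u.1 v.2 + dotp u.2 v.1

/-- A subspace is isotropic if `ω` vanishes on all pairs of its elements. -/
def IsIsotropic {p : ℕ}
    (V : Submodule (ZMod 2) ((Fin p → ZMod 2) × (Fin p → ZMod 2))) : Prop :=
  ∀ u ∈ V, ∀ v ∈ V, omegaF u v = 0

/-- A maximal isotropic subspace: isotropic and not properly contained in any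
isotropic subspace. -/
def IsMaxIsotropic {p : ℕ}
    (V : Submodule (ZMod 2) ((Fin p → ZMod 2) × (Fin p → ZMod 2))) : Prop :=
  IsIsotropic V ∧ ∀ W, IsIsotropic W → V ≤ W → W = V


lemma zmod2_cases (t : ZMod 2) : t = 0 ∨ t = 1 := by revert t; decide

lemma sgn_zero : sgn 0 = 1 := rfl
lemma val_one : (1 : ZMod 2).val = 1 := rfl
lemma sgn_one : sgn 1 = -1 := by simp [sgn, val_one]

lemma add11 : (1 + 1 : ZMod 2) = 0 := by decide
lemma sgn_add (s t : ZMod 2) : sgn (s + t) = sgn s * sgn t := by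
  rcases zmod2_cases s with hs | hs <;> rcases zmod2_cases t with ht | ht <;>
    subst hs <;> subst ht <;> simp [sgn_zero, sgn_one, add11]

lemma sgn_mul_self (s : ZMod 2) : sgn s * sgn s = 1 := by
  rcases zmod2_cases s with hs | hs <;> subst hs <;> simp [sgn_zero, sgn_one]

lemma sgn_ne_zero (s : ZMod 2) : sgn s ≠ 0 := by
  rcases zmod2_cases s with hs | hs <;> subst hs <;> simp [sgn_zero, sgn_one]

lemma dotp_add_left {p : ℕ} (a b c : Fin p → ZMod 2) :
    dotp (a + b) c = dotp a c + dotp b c := by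
  simp [dotp, add_mul, Finset.sum_add_distrib]

lemma dotp_add_right {p : ℕ} (a b c : Fin p → ZMod 2) :
    dotp a (b + c) = dotp a b + dotp a c := by
  simp [dotp, mul_add, Finset.sum_add_distrib]

lemma dotp_comm {p : ℕ} (a b : Fin p → ZMod 2) : dotp a b = dotp b a := by
  simp [dotp, mul_comm]

lemma zmod2_add_self (t : ZMod 2) : t + t = 0 := by revert t; decide

lemma fun_add_self {p : ℕ} (a : Fin p → ZMod 2) : a + a = 0 := by
  funext i; exact zmod2_add_self _

lemma pauli_mul {p : ℕ} (a b c d : Fin p → ZMod 2) :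
    pauli a b * pauli c d = sgn (dotp d a) • pauli (a + c) (b + d) := by
  ext x y
  rw [Matrix.mul_apply]
  rw [Finset.sum_eq_single (x + a)]
  · simp only [pauli, Matrix.smul_apply, smul_eq_mul, if_pos rfl, if_true, ← add_assoc]
    by_cases h : y = x + a + c
    · rw [if_pos h, if_pos h]
      rw [dotp_add_right, dotp_add_left, sgn_add, sgn_add]
      ring
    · rw [if_neg h, if_neg h, mul_zero, mul_zero]
  · intro z _ hz
    simp only [pauli]
    rw [if_neg hz, zero_mul]
  · intro h; exact absurd (Finset.mem_univ _) h

lemma pauli_transpose {p : ℕ} (a b : Fin p → ZMod 2) :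
    (pauli a b)ᵀ = sgn (dotp b a) • pauli a b := by
  ext x y
  simp only [Matrix.transpose_apply, pauli, Matrix.smul_apply, smul_eq_mul]
  have hiff : x = y + a ↔ y = x + a := by
    constructor <;> intro h <;>
      simp [h, add_assoc, fun_add_self]
  by_cases h : y = x + a
  · rw [if_pos (hiff.mpr h), if_pos h, h, dotp_add_right, sgn_add]
    rw [dotp_comm b a]; ring
  · rw [if_neg (fun hh => h (hiff.mp hh)), if_neg h, mul_zero]

lemma pauli_zero {p : ℕ} : (pauli (0 : Fin p → ZMod 2) 0) = 1 := by
  ext x y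
  simp [pauli, Matrix.one_apply, dotp, sgn_zero, eq_comm]

lemma pauli_orth {p : ℕ} (a b : Fin p → ZMod 2) :
    (pauli a b)ᵀ * pauli a b = 1 := by
  rw [pauli_transpose, Matrix.smul_mul, pauli_mul, fun_add_self, fun_add_self,
    pauli_zero, smul_smul, sgn_mul_self, one_smul]

lemma pauli_real {p : ℕ} (a b : Fin p → ZMod 2) (x y : Fin p → ZMod 2) :
    (starRingEnd ℂ) (pauli a b x y) = pauli a b x y := by
  simp only [pauli]
  split
  · simp [sgn, map_pow]
  · simp

lemma adjoint_move {p : ℕ} (a b : Fin p → ZMod 2) (φ ψ : (Fin p → ZMod 2) → ℂ) :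
    ∑ x, (starRingEnd ℂ) ((pauli a b).mulVec φ x) * ψ x
      = ∑ y, (starRingEnd ℂ) (φ y) * ((pauli a b)ᵀ.mulVec ψ y) := by
  simp only [Matrix.mulVec, dotProduct, map_sum, _root_.map_mul, pauli_real,
    Finset.sum_mul, Finset.mul_sum, Matrix.transpose_apply]
  rw [Finset.sum_comm]
  congr 1; ext y; congr 1; ext x; ring

lemma inner_pauli {p : ℕ} (a b : Fin p → ZMod 2) (φ ψ : (Fin p → ZMod 2) → ℂ) :
    ∑ x, (starRingEnd ℂ) ((pauli a b).mulVec φ x) * ((pauli a b).mulVec ψ x)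
      = ∑ x, (starRingEnd ℂ) (φ x) * ψ x := by
  rw [adjoint_move, Matrix.mulVec_mulVec, pauli_orth, Matrix.one_mulVec]

lemma omegaF_add_left {p : ℕ} (u v w : (Fin p → ZMod 2) × (Fin p → ZMod 2)) :
    omegaF (u + v) w = omegaF u w + omegaF v w := by
  simp only [omegaF, Prod.fst_add, Prod.snd_add, dotp_add_left]
  ring

lemma omegaF_comm {p : ℕ} (u v : (Fin p → ZMod 2) × (Fin p → ZMod 2)) :
    omegaF u v = omegaF v u := by
  simp only [omegaF, dotp_comm]
  ring

lemma omegaF_add_right {p : ℕ} (u v w : (Fin p → ZMod 2) × (Fin p → ZMod 2)) :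
    omegaF u (v + w) = omegaF u v + omegaF u w := by
  rw [omegaF_comm, omegaF_add_left, omegaF_comm v u, omegaF_comm w u]

lemma omegaF_self {p : ℕ} (u : (Fin p → ZMod 2) × (Fin p → ZMod 2)) :
    omegaF u u = 0 := by
  simp only [omegaF, dotp_comm u.2 u.1]
  exact zmod2_add_self _

/-- For w ∉ maximal isotropic V, there is u ∈ V anticommuting with w. -/
lemma exists_anticomm {p : ℕ}
    (V : Submodule (ZMod 2) ((Fin p → ZMod 2) × (Fin p → ZMod 2)))
    (hV : IsMaxIsotropic V) (w : (Fin p → ZMod 2) × (Fin p → ZMod 2))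
    (hw : w ∉ V) : ∃ u ∈ V, omegaF u w = 1 := by
  by_contra hcon
  push_neg at hcon
  have h0 : ∀ u ∈ V, omegaF u w = 0 := by
    intro u hu
    rcases zmod2_cases (omegaF u w) with h | h
    · exact h
    · exact absurd h (hcon u hu)
  set W := V ⊔ Submodule.span (ZMod 2) {w} with hWdef
  have hWiso : IsIsotropic W := by
    intro x hx y hy
    rw [hWdef, Submodule.mem_sup] at hx hy
    obtain ⟨v1, hv1, z1, hz1, rfl⟩ := hx
    obtain ⟨v2, hv2, z2, hz2, rfl⟩ := hy
    rw [Submodule.mem_span_singleton] at hz1 hz2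
    obtain ⟨t1, rfl⟩ := hz1
    obtain ⟨t2, rfl⟩ := hz2
    have hzw : ∀ (t : ZMod 2) (v : (Fin p → ZMod 2) × (Fin p → ZMod 2)),
        v ∈ V → omegaF (v + t • w) (v + t • w) = 0 ∧ True := by exact fun t v hv => ⟨omegaF_self _, trivial⟩
    rw [omegaF_add_left, omegaF_add_right, omegaF_add_right]
    have e1 : omegaF v1 v2 = 0 := hV.1 v1 hv1 v2 hv2
    have e2 : omegaF v1 (t2 • w) = 0 := by
      rcases zmod2_cases t2 with h | h <;> subst h
      · simp [omegaF, dotp]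
      · rw [one_smul]; exact h0 v1 hv1
    have e3 : omegaF (t1 • w) v2 = 0 := by
      rcases zmod2_cases t1 with h | h <;> subst h
      · simp [omegaF, dotp]
      · rw [one_smul, omegaF_comm]; exact h0 v2 hv2
    have e4 : omegaF (t1 • w) (t2 • w) = 0 := by
      rcases zmod2_cases t1 with h | h <;> subst h
      · simp [omegaF, dotp]
      · rcases zmod2_cases t2 with h | h <;> subst h
        · simp [omegaF, dotp]
        · simp only [one_smul]; exact omegaF_self w
    rw [e1, e2, e3, e4]; ring
  have hWV : W = V := hV.2 W hWiso le_sup_left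
  exact hw (hWV ▸ (le_sup_right (a := V) (Submodule.mem_span_singleton_self w)))
lemma inner_psi0 {p : ℕ}
    (V : Submodule (ZMod 2) ((Fin p → ZMod 2) × (Fin p → ZMod 2)))
    (hV : IsMaxIsotropic V) (ψ₀ : (Fin p → ZMod 2) → ℂ)
    (hstab : ∀ u ∈ V, (pauli u.1 u.2).mulVec ψ₀ = ψ₀)
    (w : (Fin p → ZMod 2) × (Fin p → ZMod 2)) (hw : w ∉ V) :
    ∑ x, (starRingEnd ℂ) (ψ₀ x) * ((pauli w.1 w.2).mulVec ψ₀ x) = 0 := by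
  obtain ⟨u, hu, hω⟩ := exists_anticomm V hV w hw
  have hψ := hstab u hu
  have hd : dotp u.2 w.1 = 1 + dotp w.2 u.1 := by
    have h1 : dotp u.1 w.2 + dotp u.2 w.1 = 1 := hω
    have h2 : dotp w.2 u.1 = dotp u.1 w.2 := dotp_comm _ _
    rw [h2]
    have h3 := zmod2_add_self (dotp u.1 w.2)
    linear_combination h1 - h3
  have hcomm : pauli w.1 w.2 * pauli u.1 u.2 = -(pauli u.1 u.2 * pauli w.1 w.2) := by
    rw [pauli_mul, pauli_mul, add_comm w.1 u.1, add_comm w.2 u.2, ← neg_smul]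
    congr 1
    rw [hd, sgn_add, sgn_one]; ring
  have key : (pauli w.1 w.2).mulVec ψ₀
      = -((pauli u.1 u.2).mulVec ((pauli w.1 w.2).mulVec ψ₀)) := by
    conv_lhs => rw [← hψ]
    rw [Matrix.mulVec_mulVec, hcomm, Matrix.neg_mulVec, Matrix.mulVec_mulVec]
  have hS : ∑ x, (starRingEnd ℂ) (ψ₀ x) * ((pauli w.1 w.2).mulVec ψ₀ x)
      = -(∑ x, (starRingEnd ℂ) (ψ₀ x) * ((pauli w.1 w.2).mulVec ψ₀ x)) := by
    calc ∑ x, (starRingEnd ℂ) (ψ₀ x) * ((pauli w.1 w.2).mulVec ψ₀ x)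
        = ∑ x, (starRingEnd ℂ) (((pauli u.1 u.2).mulVec ψ₀) x)
            * ((pauli w.1 w.2).mulVec ψ₀ x) := by rw [hψ]
      _ = ∑ x, (starRingEnd ℂ) (((pauli u.1 u.2).mulVec ψ₀) x)
            * ((-((pauli u.1 u.2).mulVec ((pauli w.1 w.2).mulVec ψ₀))) x) := by
            refine Finset.sum_congr rfl fun x _ => ?_
            conv_lhs => rw [key]
      _ = -(∑ x, (starRingEnd ℂ) (((pauli u.1 u.2).mulVec ψ₀) x)
            * (((pauli u.1 u.2).mulVec ((pauli w.1 w.2).mulVec ψ₀)) x)) := by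
            simp [mul_neg]
      _ = -(∑ x, (starRingEnd ℂ) (ψ₀ x) * ((pauli w.1 w.2).mulVec ψ₀ x)) := by
            rw [inner_pauli]
  linear_combination hS / 2

/-- Paper's Theorem 2: Given a stabilizer state `ψ₀` of a maximal
isotropic subspace `V`, `0 < K ≤ 2^p`, and labels `cd j` lying in pairwise distinct
cosets of `V`, the basis codewords `ψ_j = σ(c_j,d_j).mulVec ψ₀` are pairwise orthogonal
and nonzero; consequently they are linearly independent and span a `K`-dimensional code
subspace `[[p,K]]` of `ℂ^(2^p)`. -/
theorem code_subspace_dim {p : ℕ} (hp : 1 ≤ p)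
    (V : Submodule (ZMod 2) ((Fin p → ZMod 2) × (Fin p → ZMod 2)))
    (hV : IsMaxIsotropic V) (ψ₀ : (Fin p → ZMod 2) → ℂ) (hψ₀ : ψ₀ ≠ 0)
    (hstab : ∀ u ∈ V, (pauli u.1 u.2).mulVec ψ₀ = ψ₀)
    (K : ℕ) (hK : 0 < K) (hK' : K ≤ 2 ^ p)
    (cd : Fin K → (Fin p → ZMod 2) × (Fin p → ZMod 2))
    (hdist : ∀ j k, j ≠ k → cd j + cd k ∉ V) :
    (∀ j k, j ≠ k →
        (∑ x, (starRingEnd ℂ) ((pauli (cd j).1 (cd j).2).mulVec ψ₀ x) *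
          (pauli (cd k).1 (cd k).2).mulVec ψ₀ x) = 0) ∧
    (∀ j, (pauli (cd j).1 (cd j).2).mulVec ψ₀ ≠ 0) ∧
    LinearIndependent ℂ (fun j : Fin K => (pauli (cd j).1 (cd j).2).mulVec ψ₀) ∧
    Module.finrank ℂ
        (Submodule.span ℂ
          (Set.range fun j : Fin K => (pauli (cd j).1 (cd j).2).mulVec ψ₀)) = K := by
  have horth : ∀ j k, j ≠ k →
      (∑ x, (starRingEnd ℂ) ((pauli (cd j).1 (cd j).2).mulVec ψ₀ x) *
        (pauli (cd k).1 (cd k).2).mulVec ψ₀ x) = 0 := by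
    intro j k hjk
    rw [adjoint_move, pauli_transpose]
    have h0 := inner_psi0 V hV ψ₀ hstab (cd j + cd k) (hdist j k hjk)
    simp only [Prod.fst_add, Prod.snd_add] at h0
    have hexp : ∀ y, ((sgn (dotp (cd j).2 (cd j).1) • pauli (cd j).1 (cd j).2).mulVec
        ((pauli (cd k).1 (cd k).2).mulVec ψ₀)) y
        = (sgn (dotp (cd j).2 (cd j).1) * sgn (dotp (cd k).2 (cd j).1))
          * ((pauli ((cd j).1 + (cd k).1) ((cd j).2 + (cd k).2)).mulVec ψ₀) y := by
      intro y
      rw [Matrix.smul_mulVec, Matrix.mulVec_mulVec, pauli_mul,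
        Matrix.smul_mulVec]
      simp [mul_assoc]
    calc ∑ y, (starRingEnd ℂ) (ψ₀ y) *
          ((sgn (dotp (cd j).2 (cd j).1) • pauli (cd j).1 (cd j).2).mulVec
            ((pauli (cd k).1 (cd k).2).mulVec ψ₀)) y
        = (sgn (dotp (cd j).2 (cd j).1) * sgn (dotp (cd k).2 (cd j).1))
          * ∑ y, (starRingEnd ℂ) (ψ₀ y)
            * ((pauli ((cd j).1 + (cd k).1) ((cd j).2 + (cd k).2)).mulVec ψ₀) y := by
          rw [Finset.mul_sum]
          refine Finset.sum_congr rfl fun y _ => ?_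
          rw [hexp y]; ring
      _ = 0 := by rw [h0, mul_zero]
  have hnz : ∀ j, (pauli (cd j).1 (cd j).2).mulVec ψ₀ ≠ 0 := by
    intro j hz
    apply hψ₀
    have h1 : ψ₀ = ((pauli (cd j).1 (cd j).2)ᵀ
        * pauli (cd j).1 (cd j).2).mulVec ψ₀ := by
      rw [pauli_orth, Matrix.one_mulVec]
    rw [h1, ← Matrix.mulVec_mulVec, hz, Matrix.mulVec_zero]
  have hself : ∀ (f : (Fin p → ZMod 2) → ℂ), f ≠ 0 →
      (∑ x, (starRingEnd ℂ) (f x) * f x) ≠ 0 := by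
    intro f hf h
    apply hf
    have hc : ∑ x, ((Complex.normSq (f x) : ℝ) : ℂ) = 0 := by
      rw [← h]
      refine Finset.sum_congr rfl fun x _ => ?_
      rw [Complex.normSq_eq_conj_mul_self]
    have hr : ∑ x, Complex.normSq (f x) = 0 := by exact_mod_cast hc
    funext x
    have := (Finset.sum_eq_zero_iff_of_nonneg
      (fun i _ => Complex.normSq_nonneg (f i))).mp hr x (Finset.mem_univ x)
    simpa using Complex.normSq_eq_zero.mp this
  have hli : LinearIndependent ℂ
      (fun j : Fin K => (pauli (cd j).1 (cd j).2).mulVec ψ₀) := by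
    rw [Fintype.linearIndependent_iff]
    intro g hg j
    have h1 : ∑ x, (starRingEnd ℂ) ((pauli (cd j).1 (cd j).2).mulVec ψ₀ x)
        * ((∑ k, g k • (pauli (cd k).1 (cd k).2).mulVec ψ₀) x)
        = g j * ∑ x, (starRingEnd ℂ) ((pauli (cd j).1 (cd j).2).mulVec ψ₀ x)
          * ((pauli (cd j).1 (cd j).2).mulVec ψ₀ x) := by
      simp only [Finset.sum_apply, Pi.smul_apply, smul_eq_mul, Finset.mul_sum]
      rw [Finset.sum_comm]
      rw [Finset.sum_eq_single j]
      · refine Finset.sum_congr rfl fun x _ => ?_; ring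
      · intro k _ hk
        have ho := horth j k (Ne.symm hk)
        calc ∑ x, (starRingEnd ℂ) ((pauli (cd j).1 (cd j).2).mulVec ψ₀ x)
              * (g k * ((pauli (cd k).1 (cd k).2).mulVec ψ₀ x))
            = g k * ∑ x, (starRingEnd ℂ) ((pauli (cd j).1 (cd j).2).mulVec ψ₀ x)
              * ((pauli (cd k).1 (cd k).2).mulVec ψ₀ x) := by
              rw [Finset.mul_sum]
              refine Finset.sum_congr rfl fun x _ => ?_; ring
          _ = 0 := by rw [ho, mul_zero]
      · intro h; exact absurd (Finset.mem_univ j) h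
    rw [hg] at h1
    simp only [Pi.zero_apply, mul_zero, Finset.sum_const_zero] at h1
    rcases mul_eq_zero.mp h1.symm with h | h
    · exact h
    · exact absurd h (hself _ (hnz j))
  refine ⟨horth, hnz, hli, ?_⟩
  rw [finrank_span_eq_card hli]
  simp
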